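/- Let R be a commutative algebra over a field K and I a two-sided ideal of D(R). Then the ideal I_0 := I ∩ R of R satisfies D(R)·I_0·D(R) ∩ R = I_0, where D(R)·I_0·D(R) denotes the two-sided ideal of D(R) generated by I_0. -/
import Mathlib


/-- The multiplication operator on a commutative `K`-algebra `R` given by an element `r : R`,
viewed as a `K`-linear endomorphism of `R`.  This identifies `R` with `D_0(R)`. -/
noncomputable def mulOp (K : Type*) {R : Type*} [Field K] [CommRing R] [Algebra K R]
    (r : R) : Module.End K R := Algebra.lmul K R r

/-- `IsDO K n u` means that `u` is a (`K`-linear) differential operator on `R` of order at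
most `n` in the sense of the order filtration: `D_{-1}(R) = 0` and
`D_n(R) = {u ∈ End_K(R) : [r, u] ∈ D_{n-1}(R) for all r ∈ R}`. -/
def IsDO (K : Type*) {R : Type*} [Field K] [CommRing R] [Algebra K R] :
    ℕ → Module.End K R → Prop
  | 0, u => ∀ r : R, mulOp K r * u = u * mulOp K r
  | n + 1, u => ∀ r : R, IsDO K n (mulOp K r * u - u * mulOp K r)

/-- The ring `D(R) = ⋃ D_n(R)` of all `K`-linear differential operators on `R`,
as a subset of `End_K(R)`. -/
def DiffOp (K R : Type*) [Field K] [CommRing R] [Algebra K R] :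
    Set (Module.End K R) := {u | ∃ n, IsDO K n u}

/-- `I` is a two-sided ideal of the ring `D(R)`. -/
structure IsIdealOfD (K R : Type*) [Field K] [CommRing R] [Algebra K R]
    (I : Set (Module.End K R)) : Prop where
  subset : I ⊆ DiffOp K R
  zero_mem : (0 : Module.End K R) ∈ I
  add_mem : ∀ u v, u ∈ I → v ∈ I → u + v ∈ I
  neg_mem : ∀ u, u ∈ I → -u ∈ I
  mul_mem_left : ∀ d u, d ∈ DiffOp K R → u ∈ I → d * u ∈ I
  mul_mem_right : ∀ d u, d ∈ DiffOp K R → u ∈ I → u * d ∈ I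

/-- The two-sided ideal `D(R)·S·D(R)` of `D(R)` generated by a subset `S ⊆ D(R)`. -/
def genD (K R : Type*) [Field K] [CommRing R] [Algebra K R]
    (S : Set (Module.End K R)) : Set (Module.End K R) :=
  ⋂₀ {J | IsIdealOfD K R J ∧ S ⊆ J}

/-- For a two-sided ideal `I` of `D(R)` and `I₀ := I ∩ R`, one has
`D(R)·I₀·D(R) ∩ R = I₀`. -/
theorem stmt2 {K R : Type*} [Field K] [CommRing R] [Algebra K R]
    (I : Set (Module.End K R)) (hI : IsIdealOfD K R I) :
    {r : R | mulOp K r ∈ genD K R ((fun a : R => mulOp K a) '' {r : R | mulOp K r ∈ I})}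
      = {r : R | mulOp K r ∈ I} := by
  ext r
  constructor
  · intro h
    exact h I ⟨hI, Set.image_preimage_subset _ _⟩
  · intro h J hJ
    exact hJ.2 ⟨r, h, rfl⟩
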